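/- Let q ≥ 2, a ≥ 1, integers n = k_1 ≥ k_2 ≥ … ≥ k_a ≥ 0 =: k_{a+1}, and nonzero vectors b_1,…,b_n ∈ ℤ_qⁿ such that: (i) after some permutation of the indices, the n × n integer matrix whose rows are σ(b_1),…,σ(b_n) is upper triangular with nonzero diagonal entries; and (ii) for each i, the first nonzero entry of σ(b_i) divides q and divides every other entry of σ(b_i). Let Λ_D be the associated Construction D set. Then |Λ_D ∩ [0,q^a)ⁿ| = q^{k_1 + k_2 + … + k_a} / ∏_{i=1}^{n} (q / O(b_i)), where O(b_i) is the order of b_i in ℤ_qⁿ. -/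

import Mathlib

/-- The Construction D set associated to `q`, `a`, parameters `k` (with `k (a+1) = 0`)
and vectors `b 1, …, b (k 1)` in `ℤ_qⁿ`. -/
def lambdaD (q a n : ℕ) (k : ℕ → ℕ) (b : ℕ → Fin n → ZMod q) : Set (Fin n → ℤ) :=
  {v | ∃ z : Fin n → ℤ, ∃ α : ℕ → ℕ → ℕ,
    (∀ s, 1 ≤ s → s ≤ a → ∀ i, k (s + 1) < i → i ≤ k s →
      α s i < addOrderOf (b i) * q ^ (s - 1)) ∧
    v = fun t => (q : ℤ) ^ a * z t
      + ∑ s ∈ Finset.Icc 1 a, ∑ i ∈ Finset.Ioc (k (s + 1)) (k s),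
          (α s i : ℤ) * (q : ℤ) ^ (a - s) * (((b i) t).val : ℤ)}

open Finset

lemma aux_kchain (a : ℕ) (k : ℕ → ℕ) (hk : ∀ s, 1 ≤ s → s ≤ a → k (s + 1) ≤ k s) :
    ∀ x y, 1 ≤ x → x ≤ y → y ≤ a + 1 → k y ≤ k x := by
  intro x y hx hxy hya
  induction y with
  | zero => omega
  | succ y ih =>
    rcases Nat.eq_or_lt_of_le hxy with h | h
    · rw [h]
    · exact le_trans (hk y (by omega) (by omega)) (ih (by omega) (by omega))

lemma aux_Icc_Ioc (n : ℕ) : Finset.Icc 1 n = Finset.Ioc 0 n := by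
  ext x; simp only [Finset.mem_Icc, Finset.mem_Ioc]; omega

@[to_additive]
lemma aux_prod_convert {M : Type*} [CommMonoid M] (a n : ℕ) (k : ℕ → ℕ)
    (hkn : ∀ s, 1 ≤ s → s ≤ a → k s ≤ n) (F : ℕ → ℕ → M)
    (hF : ∀ s, 1 ≤ s → s ≤ a → ∀ i, 1 ≤ i → i ≤ n → ¬(k (s + 1) < i ∧ i ≤ k s) → F s i = 1) :
    ∏ s : Fin a, ∏ i : Fin n, F ((s : ℕ) + 1) ((i : ℕ) + 1)
      = ∏ s ∈ Icc 1 a, ∏ i ∈ Ioc (k (s + 1)) (k s), F s i := by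
  have houter : ∀ G : ℕ → M, ∏ s ∈ Icc 1 a, G s = ∏ s : Fin a, G ((s : ℕ) + 1) := by
    intro G
    rw [← Finset.Ico_add_one_right_eq_Icc, Finset.prod_Ico_eq_prod_range]
    rw [Fin.prod_univ_eq_prod_range (fun s => G (s + 1)) a]
    simp [Nat.add_comm]
  rw [houter]
  refine Finset.prod_congr rfl ?_
  intro s _
  have hs := s.isLt
  have hs1 : 1 ≤ (s : ℕ) + 1 := by omega
  have hsa : (s : ℕ) + 1 ≤ a := by omega
  have hinner : ∀ G : ℕ → M, ∏ i ∈ Icc 1 n, G i = ∏ i : Fin n, G ((i : ℕ) + 1) := by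
    intro G
    rw [← Finset.Ico_add_one_right_eq_Icc, Finset.prod_Ico_eq_prod_range]
    rw [Fin.prod_univ_eq_prod_range (fun i => G (i + 1)) n]
    simp [Nat.add_comm]
  rw [← hinner, aux_Icc_Ioc]
  symm
  apply Finset.prod_subset
  · apply Finset.Ioc_subset_Ioc (Nat.zero_le _) (hkn _ hs1 hsa)
  · intro i hi hni
    simp only [Finset.mem_Ioc] at hi hni
    exact hF _ hs1 hsa i (by omega) (by omega) (by omega)

lemma aux_partition {M : Type*} [CommMonoid M] (a : ℕ) (k : ℕ → ℕ) (ha : 1 ≤ a)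
    (hk : ∀ s, 1 ≤ s → s ≤ a → k (s + 1) ≤ k s) (f : ℕ → M) :
    ∏ s ∈ Icc 1 a, ∏ i ∈ Ioc (k (s + 1)) (k s), f i = ∏ i ∈ Ioc (k (a + 1)) (k 1), f i := by
  induction a with
  | zero => omega
  | succ a ih =>
    rcases Nat.eq_or_lt_of_le ha with h | h
    · simp [← h]
    · have ha' : 1 ≤ a := by omega
      rw [Finset.prod_Icc_succ_top (by omega), ih ha' (fun s h1 h2 => hk s h1 (by omega)),
        mul_comm]
      exact Finset.prod_Ioc_consecutive f (hk (a + 1) (by omega) le_rfl)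
        (aux_kchain (a + 1) k hk 1 (a + 1) le_rfl (by omega) (by omega))

lemma aux_tel (a : ℕ) (k : ℕ → ℕ) (hk : ∀ s, 1 ≤ s → s ≤ a → k (s + 1) ≤ k s) :
    ∑ s ∈ Icc 1 a, s * (k s - k (s + 1)) + a * k (a + 1) = ∑ s ∈ Icc 1 a, k s := by
  induction a with
  | zero => simp
  | succ a ih =>
    rw [Finset.sum_Icc_succ_top (by omega), Finset.sum_Icc_succ_top (by omega) k]
    have h1 := hk (a + 1) (by omega) le_rfl
    have hih := ih (fun s h1 h2 => hk s h1 (by omega))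
    have h2 : (a + 1) * (k (a + 1) - k (a + 1 + 1)) + (a + 1) * k (a + 1 + 1)
        = (a + 1) * k (a + 1) := by
      rw [← Nat.mul_add, Nat.sub_add_cancel h1]
    have h3 : (a + 1) * k (a + 1) = a * k (a + 1) + k (a + 1) := by ring
    omega

lemma aux_order (q n : ℕ) (hq : 2 ≤ q) (x : Fin n → ZMod q) (j₀ : Fin n)
    (hne : x j₀ ≠ 0) (hdq : (x j₀).val ∣ q) (hall : ∀ j, (x j₀).val ∣ (x j).val) :
    addOrderOf x * (x j₀).val = q := by
  haveI : NeZero q := ⟨by omega⟩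
  set g := (x j₀).val with hg
  have hgne : g ≠ 0 := fun h => hne ((ZMod.val_eq_zero _).mp h)
  have h1 : (q / g) • x = 0 := by
    funext j
    obtain ⟨m, hm⟩ := hall j
    have hxj : x j = ((g * m : ℕ) : ZMod q) := by
      rw [← hm, ZMod.natCast_val, ZMod.cast_id]
    simp only [Pi.smul_apply, Pi.zero_apply, nsmul_eq_mul, hxj]
    rw [show ((q / g : ℕ) : ZMod q) * ((g * m : ℕ) : ZMod q)
        = (((q / g) * (g * m) : ℕ) : ZMod q) by push_cast; ring]
    rw [show (q / g) * (g * m) = q * m by rw [← Nat.mul_assoc, Nat.div_mul_cancel hdq]]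
    push_cast
    simp
  have h2 : addOrderOf x ∣ q / g := addOrderOf_dvd_of_nsmul_eq_zero h1
  have h3 : q / g ∣ addOrderOf x := by
    have h4 := addOrderOf_nsmul_eq_zero x
    have h5 : (addOrderOf x) • x j₀ = 0 := congrFun h4 j₀
    have h6 : ((addOrderOf x * g : ℕ) : ZMod q) = 0 := by
      push_cast
      rw [← h5, nsmul_eq_mul, hg, ZMod.natCast_val, ZMod.cast_id]
    have h7 : q ∣ addOrderOf x * g := (ZMod.natCast_eq_zero_iff _ _).mp h6
    have h8 : (q / g) * g ∣ (addOrderOf x) * g := by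
      rwa [Nat.div_mul_cancel hdq]
    exact (Nat.mul_dvd_mul_iff_right (Nat.pos_of_ne_zero hgne)).mp h8
  rw [Nat.dvd_antisymm h2 h3, Nat.div_mul_cancel hdq]

noncomputable def bndD (q a n : ℕ) (k : ℕ → ℕ) (b : ℕ → Fin n → ZMod q)
    (s : Fin a) (i : Fin n) : ℕ :=
  if k ((s : ℕ) + 1 + 1) < (i : ℕ) + 1 ∧ (i : ℕ) + 1 ≤ k ((s : ℕ) + 1) then
    addOrderOf (b ((i : ℕ) + 1)) * q ^ (s : ℕ) else 1

noncomputable def WD (q a n : ℕ) (k : ℕ → ℕ) (b : ℕ → Fin n → ZMod q)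
    (β : ∀ s : Fin a, ∀ i : Fin n, Fin (bndD q a n k b s i)) : Fin n → ℤ :=
  fun t => ∑ s : Fin a, ∑ i : Fin n,
    ((β s i : ℕ) : ℤ) * (q : ℤ) ^ (a - ((s : ℕ) + 1)) * (((b ((i : ℕ) + 1)) t).val : ℤ)

noncomputable def GD (q a n : ℕ) (k : ℕ → ℕ) (b : ℕ → Fin n → ZMod q)
    (β : ∀ s : Fin a, ∀ i : Fin n, Fin (bndD q a n k b s i)) : Fin n → ℤ :=
  fun t => WD q a n k b β t % (q : ℤ) ^ a

lemma aux_range (q a n : ℕ) (hq : 2 ≤ q) (ha : 1 ≤ a) (k : ℕ → ℕ) (hk1 : k 1 = n)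
    (hk : ∀ s, 1 ≤ s → s ≤ a → k (s + 1) ≤ k s) (b : ℕ → Fin n → ZMod q) :
    Set.range (GD q a n k b)
      = lambdaD q a n k b ∩ {v : Fin n → ℤ | ∀ t, 0 ≤ v t ∧ v t < (q : ℤ) ^ a} := by
  classical
  have hkn : ∀ s, 1 ≤ s → s ≤ a → k s ≤ n := fun s h1 h2 =>
    hk1 ▸ aux_kchain a k hk 1 s le_rfl h1 (by omega)
  have hN : (0 : ℤ) < (q : ℤ) ^ a := by
    have : (0 : ℤ) < (q : ℤ) := by exact_mod_cast (by omega : 0 < q)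
    positivity
  have hNne : ((q : ℤ) ^ a) ≠ 0 := ne_of_gt hN
  ext v
  constructor
  · rintro ⟨β, rfl⟩
    constructor
    · -- membership in lambdaD
      set af : ℕ → ℕ → ℕ := fun s i =>
        if h : 1 ≤ s ∧ s ≤ a ∧ 1 ≤ i ∧ i ≤ n then
          (β ⟨s - 1, by omega⟩ ⟨i - 1, by omega⟩ : ℕ) else 0 with haf
      refine ⟨fun t => -(WD q a n k b β t / (q : ℤ) ^ a), af, ?_, ?_⟩
      · intro s hs1 hsa i hik hik2
        have hi1 : 1 ≤ i := by omega
        have hin : i ≤ n := le_trans hik2 (hkn s hs1 hsa)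
        have hbnd : bndD q a n k b ⟨s - 1, by omega⟩ ⟨i - 1, by omega⟩
            = addOrderOf (b i) * q ^ (s - 1) := by
          simp only [bndD]
          rw [show (s - 1) + 1 = s by omega, show (i - 1) + 1 = i by omega,
            if_pos ⟨hik, hik2⟩]
        simp only [haf]
        rw [dif_pos ⟨hs1, hsa, hi1, hin⟩]
        exact lt_of_lt_of_eq (Fin.is_lt _) hbnd
      · funext t
        have hW : ∑ s ∈ Icc 1 a, ∑ i ∈ Ioc (k (s + 1)) (k s),
              (af s i : ℤ) * (q : ℤ) ^ (a - s) * (((b i) t).val : ℤ)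
            = WD q a n k b β t := by
          rw [← aux_sum_convert a n k hkn
            (fun s i => (af s i : ℤ) * (q : ℤ) ^ (a - s) * (((b i) t).val : ℤ)) ?_]
          · apply Finset.sum_congr rfl
            intro s _
            apply Finset.sum_congr rfl
            intro i _
            have hs := s.isLt
            have hi := i.isLt
            simp only [haf]
            rw [dif_pos ⟨by omega, by omega, by omega, by omega⟩]
            rfl
          · intro s hs1 hsa i hi1 hin hno
            simp only [haf]
            rw [dif_pos ⟨hs1, hsa, hi1, hin⟩]
            have hbnd : bndD q a n k b ⟨s - 1, by omega⟩ ⟨i - 1, by omega⟩ = 1 := by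
              simp only [bndD]
              rw [show (s - 1) + 1 = s by omega, show (i - 1) + 1 = i by omega,
                if_neg hno]
            have hb0 : (β ⟨s - 1, by omega⟩ ⟨i - 1, by omega⟩ : ℕ) = 0 :=
              Nat.lt_one_iff.mp (lt_of_lt_of_eq (Fin.is_lt _) hbnd)
            rw [hb0]
            simp
        show WD q a n k b β t % (q : ℤ) ^ a = _
        rw [hW, Int.emod_def]
        ring
    · intro t
      exact ⟨Int.emod_nonneg _ hNne, Int.emod_lt_of_pos _ hN⟩
  · rintro ⟨⟨z, α, hα, hveq⟩, hbox⟩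
    have key : ∀ (B : ∀ s : Fin a, ∀ i : Fin n, Fin (bndD q a n k b s i)),
        (∀ (s : Fin a) (i : Fin n), ((B s i : ℕ))
          = if k ((s : ℕ) + 1 + 1) < (i : ℕ) + 1 ∧ (i : ℕ) + 1 ≤ k ((s : ℕ) + 1) then
              α ((s : ℕ) + 1) ((i : ℕ) + 1) else 0) →
        GD q a n k b B = v := by
      intro B hB
      funext t
      have hW : WD q a n k b B t
          = ∑ s ∈ Icc 1 a, ∑ i ∈ Ioc (k (s + 1)) (k s),
              ((if k (s + 1) < i ∧ i ≤ k s then α s i else 0 : ℕ) : ℤ)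
                * (q : ℤ) ^ (a - s) * (((b i) t).val : ℤ) := by
        rw [← aux_sum_convert a n k hkn
          (fun s i => ((if k (s + 1) < i ∧ i ≤ k s then α s i else 0 : ℕ) : ℤ)
            * (q : ℤ) ^ (a - s) * (((b i) t).val : ℤ)) ?_]
        · simp only [WD]
          apply Finset.sum_congr rfl
          intro s _
          apply Finset.sum_congr rfl
          intro i _
          rw [hB s i]
        · intro s hs1 hsa i hi1 hin hno
          rw [if_neg hno]
          simp
      have hsum : ∑ s ∈ Icc 1 a, ∑ i ∈ Ioc (k (s + 1)) (k s),
              ((if k (s + 1) < i ∧ i ≤ k s then α s i else 0 : ℕ) : ℤ)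
                * (q : ℤ) ^ (a - s) * (((b i) t).val : ℤ)
          = ∑ s ∈ Icc 1 a, ∑ i ∈ Ioc (k (s + 1)) (k s),
              (α s i : ℤ) * (q : ℤ) ^ (a - s) * (((b i) t).val : ℤ) := by
        apply Finset.sum_congr rfl
        intro s _
        apply Finset.sum_congr rfl
        intro i hi
        simp only [Finset.mem_Ioc] at hi
        rw [if_pos hi]
      have hWv : WD q a n k b B t = v t + (q : ℤ) ^ a * (-z t) := by
        rw [hW, hsum, congrFun hveq t]
        ring
      show WD q a n k b B t % (q : ℤ) ^ a = v t
      rw [hWv, Int.add_mul_emod_self_left, Int.emod_eq_of_lt (hbox t).1 (hbox t).2]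
    have hp1 : ∀ (s : Fin a) (i : Fin n),
        k ((s : ℕ) + 1 + 1) < (i : ℕ) + 1 ∧ (i : ℕ) + 1 ≤ k ((s : ℕ) + 1) →
        α ((s : ℕ) + 1) ((i : ℕ) + 1) < bndD q a n k b s i := by
      intro s i h
      simp only [bndD]
      rw [if_pos h]
      have := hα ((s : ℕ) + 1) (by omega) (by have := s.isLt; omega) ((i : ℕ) + 1) h.1 h.2
      simpa using this
    have hp0 : ∀ (s : Fin a) (i : Fin n),
        ¬(k ((s : ℕ) + 1 + 1) < (i : ℕ) + 1 ∧ (i : ℕ) + 1 ≤ k ((s : ℕ) + 1)) →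
        0 < bndD q a n k b s i := by
      intro s i h
      simp only [bndD]
      rw [if_neg h]
      omega
    refine ⟨fun s i =>
      if h : k ((s : ℕ) + 1 + 1) < (i : ℕ) + 1 ∧ (i : ℕ) + 1 ≤ k ((s : ℕ) + 1) then
        ⟨α ((s : ℕ) + 1) ((i : ℕ) + 1), hp1 s i h⟩ else ⟨0, hp0 s i h⟩, key _ ?_⟩
    intro s i
    by_cases hc : k ((s : ℕ) + 1 + 1) < (i : ℕ) + 1 ∧ (i : ℕ) + 1 ≤ k ((s : ℕ) + 1)
    · rw [dif_pos hc, if_pos hc]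
    · rw [dif_neg hc, if_neg hc]

lemma aux_inj (q a n : ℕ) (hq : 2 ≤ q) (k : ℕ → ℕ)
    (hk : ∀ s, 1 ≤ s → s ≤ a → k (s + 1) ≤ k s) (b : ℕ → Fin n → ZMod q)
    (e : Equiv.Perm (Fin n))
    (he0 : ∀ i j : Fin n, (j : ℕ) < (i : ℕ) → (b ((e i : ℕ) + 1)) j = 0)
    (he1 : ∀ i : Fin n, (b ((e i : ℕ) + 1)) i ≠ 0)
    (hdiv : ∀ i, 1 ≤ i → i ≤ n → ∃ j₀ : Fin n,
      (∀ j : Fin n, (j : ℕ) < (j₀ : ℕ) → (b i) j = 0) ∧ (b i) j₀ ≠ 0 ∧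
      ((b i) j₀).val ∣ q ∧ ∀ j : Fin n, ((b i) j₀).val ∣ ((b i) j).val) :
    Function.Injective (GD q a n k b) := by
  haveI : NeZero q := ⟨by omega⟩
  have hqz : (q : ℤ) ≠ 0 := by exact_mod_cast (by omega : q ≠ 0)
  intro β β' h
  have pivot : ∀ t : Fin n,
      ((b ((e t : ℕ) + 1)) t).val ∣ q ∧ ((b ((e t : ℕ) + 1)) t).val ≠ 0 ∧
      addOrderOf (b ((e t : ℕ) + 1)) * ((b ((e t : ℕ) + 1)) t).val = q := by
    intro t
    obtain ⟨j₀, hz, hne, hdq, hall⟩ :=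
      hdiv ((e t : ℕ) + 1) (by omega) (by have := (e t).isLt; omega)
    have hj : j₀ = t := by
      rcases lt_trichotomy (j₀ : ℕ) (t : ℕ) with hlt | heq | hgt
      · exact absurd (he0 t j₀ hlt) hne
      · exact Fin.ext heq
      · exact absurd (hz t hgt) (he1 t)
    subst hj
    exact ⟨hdq, fun h0 => hne ((ZMod.val_eq_zero _).mp h0),
      aux_order q n hq _ j₀ hne hdq hall⟩
  have hdvd : ∀ t : Fin n, ((q : ℤ) ^ a) ∣ (∑ s : Fin a, ∑ i : Fin n,
      (((β' s i : ℕ) : ℤ) - ((β s i : ℕ) : ℤ)) * (q : ℤ) ^ (a - ((s : ℕ) + 1))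
        * (((b ((i : ℕ) + 1)) t).val : ℤ)) := by
    intro t
    have h1 : Int.ModEq ((q : ℤ) ^ a) (WD q a n k b β t) (WD q a n k b β' t) := congrFun h t
    have h2 := h1.dvd
    have h3 : WD q a n k b β' t - WD q a n k b β t
        = ∑ s : Fin a, ∑ i : Fin n,
          (((β' s i : ℕ) : ℤ) - ((β s i : ℕ) : ℤ)) * (q : ℤ) ^ (a - ((s : ℕ) + 1))
            * (((b ((i : ℕ) + 1)) t).val : ℤ) := by
      simp only [WD, ← Finset.sum_sub_distrib]
      apply Finset.sum_congr rfl
      intro s _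
      apply Finset.sum_congr rfl
      intro i _
      ring
    rwa [h3] at h2
  have huniq : ∀ (s s' : Fin a) (i : Fin n),
      (k ((s : ℕ) + 1 + 1) < (i : ℕ) + 1 ∧ (i : ℕ) + 1 ≤ k ((s : ℕ) + 1)) →
      (k ((s' : ℕ) + 1 + 1) < (i : ℕ) + 1 ∧ (i : ℕ) + 1 ≤ k ((s' : ℕ) + 1)) → s = s' := by
    intro s s' i hs hs'
    have hlem : ∀ (x y : Fin a), (x : ℕ) < (y : ℕ) →
        (k ((x : ℕ) + 1 + 1) < (i : ℕ) + 1 ∧ (i : ℕ) + 1 ≤ k ((x : ℕ) + 1)) →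
        (k ((y : ℕ) + 1 + 1) < (i : ℕ) + 1 ∧ (i : ℕ) + 1 ≤ k ((y : ℕ) + 1)) → False := by
      intro x y hxy hx hy
      have := aux_kchain a k hk ((x : ℕ) + 1 + 1) ((y : ℕ) + 1) (by omega) (by omega)
        (by have := y.isLt; omega)
      omega
    rcases lt_trichotomy (s : ℕ) (s' : ℕ) with hlt | heq | hgt
    · exact absurd (hlem s s' hlt hs hs') not_false
    · exact Fin.ext heq
    · exact absurd (hlem s' s hgt hs' hs) not_false
  have key : ∀ m : ℕ, ∀ hm : m < n, ∀ s : Fin a,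
      ((β s (e ⟨m, hm⟩) : ℕ) : ℤ) = ((β' s (e ⟨m, hm⟩) : ℕ) : ℤ) := by
    intro m
    induction m using Nat.strong_induction_on with
    | _ m IH =>
      intro hm s
      set t : Fin n := ⟨m, hm⟩ with ht
      have hre : ∀ s' : Fin a,
          (∑ i : Fin n, (((β' s' i : ℕ) : ℤ) - ((β s' i : ℕ) : ℤ))
              * (q : ℤ) ^ (a - ((s' : ℕ) + 1)) * (((b ((i : ℕ) + 1)) t).val : ℤ))
          = (((β' s' (e t) : ℕ) : ℤ) - ((β s' (e t) : ℕ) : ℤ))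
              * (q : ℤ) ^ (a - ((s' : ℕ) + 1)) * (((b ((e t : ℕ) + 1)) t).val : ℤ) := by
        intro s'
        rw [← Equiv.sum_comp e (fun i : Fin n => (((β' s' i : ℕ) : ℤ) - ((β s' i : ℕ) : ℤ))
              * (q : ℤ) ^ (a - ((s' : ℕ) + 1)) * (((b ((i : ℕ) + 1)) t).val : ℤ))]
        apply Finset.sum_eq_single t
        · intro j _ hjt
          have hjm : (j : ℕ) ≠ m := fun hv => hjt (Fin.ext hv)
          rcases lt_or_gt_of_ne hjm with hlt | hgt
          · have h0 := IH (j : ℕ) hlt j.isLt s'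
            rw [show (⟨(j : ℕ), j.isLt⟩ : Fin n) = j from Fin.eta j j.isLt] at h0
            rw [h0, sub_self, zero_mul, zero_mul]
          · rw [he0 j t hgt]
            simp
        · intro ht'
          exact absurd (Finset.mem_univ t) ht'
      have hcol2 : ((q : ℤ) ^ a) ∣ ∑ s' : Fin a,
          (((β' s' (e t) : ℕ) : ℤ) - ((β s' (e t) : ℕ) : ℤ))
            * (q : ℤ) ^ (a - ((s' : ℕ) + 1)) * (((b ((e t : ℕ) + 1)) t).val : ℤ) := by
        have hcg := Finset.sum_congr rfl (fun s' (_ : s' ∈ (univ : Finset (Fin a))) => hre s')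
        have := hdvd t
        rwa [hcg] at this
      by_cases hc : k ((s : ℕ) + 1 + 1) < ((e t : ℕ)) + 1 ∧ ((e t : ℕ)) + 1 ≤ k ((s : ℕ) + 1)
      · have hsingle : (∑ s' : Fin a,
            (((β' s' (e t) : ℕ) : ℤ) - ((β s' (e t) : ℕ) : ℤ))
              * (q : ℤ) ^ (a - ((s' : ℕ) + 1)) * (((b ((e t : ℕ) + 1)) t).val : ℤ))
            = (((β' s (e t) : ℕ) : ℤ) - ((β s (e t) : ℕ) : ℤ))
              * (q : ℤ) ^ (a - ((s : ℕ) + 1)) * (((b ((e t : ℕ) + 1)) t).val : ℤ) := by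
          apply Finset.sum_eq_single s
          · intro s' _ hs's
            by_cases hc' : k ((s' : ℕ) + 1 + 1) < ((e t : ℕ)) + 1 ∧ ((e t : ℕ)) + 1 ≤ k ((s' : ℕ) + 1)
            · exact absurd (huniq s' s (e t) hc' hc) hs's
            · have hbnd : bndD q a n k b s' (e t) = 1 := by
                simp only [bndD]
                rw [if_neg hc']
              have h1 : (β s' (e t) : ℕ) = 0 :=
                Nat.lt_one_iff.mp (lt_of_lt_of_eq (Fin.is_lt _) hbnd)
              have h2 : (β' s' (e t) : ℕ) = 0 :=
                Nat.lt_one_iff.mp (lt_of_lt_of_eq (Fin.is_lt _) hbnd)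
              rw [h1, h2]
              simp
          · intro hs'
            exact absurd (Finset.mem_univ s) hs'
        rw [hsingle] at hcol2
        obtain ⟨hgdq, hgne, hOg⟩ := pivot t
        have hbnd : bndD q a n k b s (e t) = addOrderOf (b ((e t : ℕ) + 1)) * q ^ (s : ℕ) := by
          simp only [bndD]
          rw [if_pos hc]
        have hb1 : (β s (e t) : ℕ) < addOrderOf (b ((e t : ℕ) + 1)) * q ^ (s : ℕ) :=
          lt_of_lt_of_eq (Fin.is_lt _) hbnd
        have hb2 : (β' s (e t) : ℕ) < addOrderOf (b ((e t : ℕ) + 1)) * q ^ (s : ℕ) :=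
          lt_of_lt_of_eq (Fin.is_lt _) hbnd
        have hsa : (s : ℕ) + 1 ≤ a := s.isLt
        have hsplit : (q : ℤ) ^ a = (q : ℤ) ^ (a - ((s : ℕ) + 1)) * (q : ℤ) ^ ((s : ℕ) + 1) := by
          rw [← pow_add]
          congr 1
          omega
        have hdc : ((q : ℤ) ^ ((s : ℕ) + 1)) ∣
            ((((β' s (e t) : ℕ) : ℤ) - ((β s (e t) : ℕ) : ℤ)) * (((b ((e t : ℕ) + 1)) t).val : ℤ)) := by
          have h5 := hcol2
          rw [show (((β' s (e t) : ℕ) : ℤ) - ((β s (e t) : ℕ) : ℤ))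
              * (q : ℤ) ^ (a - ((s : ℕ) + 1)) * (((b ((e t : ℕ) + 1)) t).val : ℤ)
              = (q : ℤ) ^ (a - ((s : ℕ) + 1)) * ((((β' s (e t) : ℕ) : ℤ) - ((β s (e t) : ℕ) : ℤ))
                * (((b ((e t : ℕ) + 1)) t).val : ℤ)) from by ring, hsplit] at h5
          exact (mul_dvd_mul_iff_left (pow_ne_zero _ hqz)).mp h5
        have hna : addOrderOf (b ((e t : ℕ) + 1)) * q ^ (s : ℕ) * ((b ((e t : ℕ) + 1)) t).val
            = q ^ ((s : ℕ) + 1) := by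
          rw [mul_right_comm, hOg, pow_succ, mul_comm]
        have hgpos : (0 : ℤ) < (((b ((e t : ℕ) + 1)) t).val : ℤ) := by
          exact_mod_cast Nat.pos_of_ne_zero hgne
        have habs : |(((β' s (e t) : ℕ) : ℤ) - ((β s (e t) : ℕ) : ℤ))
            * (((b ((e t : ℕ) + 1)) t).val : ℤ)| < (q : ℤ) ^ ((s : ℕ) + 1) := by
          rw [abs_mul, abs_of_pos hgpos]
          have hc1 : |(((β' s (e t) : ℕ) : ℤ) - ((β s (e t) : ℕ) : ℤ))|
              < ((addOrderOf (b ((e t : ℕ) + 1)) * q ^ (s : ℕ) : ℕ) : ℤ) := by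
            rw [abs_sub_lt_iff]
            constructor
            · have h0 : (0 : ℤ) ≤ ((β s (e t) : ℕ) : ℤ) := Int.natCast_nonneg _
              have h1 : ((β' s (e t) : ℕ) : ℤ)
                  < ((addOrderOf (b ((e t : ℕ) + 1)) * q ^ (s : ℕ) : ℕ) : ℤ) := by
                exact_mod_cast hb2
              omega
            · have h0 : (0 : ℤ) ≤ ((β' s (e t) : ℕ) : ℤ) := Int.natCast_nonneg _
              have h1 : ((β s (e t) : ℕ) : ℤ)
                  < ((addOrderOf (b ((e t : ℕ) + 1)) * q ^ (s : ℕ) : ℕ) : ℤ) := by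
                exact_mod_cast hb1
              omega
          calc |(((β' s (e t) : ℕ) : ℤ) - ((β s (e t) : ℕ) : ℤ))| * (((b ((e t : ℕ) + 1)) t).val : ℤ)
              < ((addOrderOf (b ((e t : ℕ) + 1)) * q ^ (s : ℕ) : ℕ) : ℤ)
                * (((b ((e t : ℕ) + 1)) t).val : ℤ) := by
                exact mul_lt_mul_of_pos_right hc1 hgpos
            _ = (q : ℤ) ^ ((s : ℕ) + 1) := by exact_mod_cast congrArg (Nat.cast : ℕ → ℤ) hna
        have hcg0 := Int.eq_zero_of_abs_lt_dvd hdc habs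
        rcases mul_eq_zero.mp hcg0 with h6 | h6
        · omega
        · exact absurd (by exact_mod_cast h6) hgne
      · have hbnd : bndD q a n k b s (e t) = 1 := by
          simp only [bndD]
          rw [if_neg hc]
        have h1 : (β s (e t) : ℕ) = 0 :=
          Nat.lt_one_iff.mp (lt_of_lt_of_eq (Fin.is_lt _) hbnd)
        have h2 : (β' s (e t) : ℕ) = 0 :=
          Nat.lt_one_iff.mp (lt_of_lt_of_eq (Fin.is_lt _) hbnd)
        rw [h1, h2]
  funext s i
  have h0 := key ((e.symm i : Fin n) : ℕ) (e.symm i).isLt s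
  rw [show (⟨((e.symm i : Fin n) : ℕ), (e.symm i).isLt⟩ : Fin n) = e.symm i
    from Fin.eta _ _] at h0
  rw [Equiv.apply_symm_apply] at h0
  exact Fin.val_injective (by exact_mod_cast h0)

/-- If `k 1 = n`, the nonzero vectors `b 1, …, b n` become, after a row
permutation, an upper triangular matrix with nonzero diagonal, and the first nonzero
entry of each `σ(b i)` divides `q` and all other entries of `σ(b i)`, then the number
of points of the Construction D set in `[0, q^a)ⁿ` equals
`q^{k_1 + ⋯ + k_a} / ∏_{i=1}^{n} (q / O(b_i))`. -/
theorem card_lambdaD_box_triangular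
    (q a n : ℕ) (hq : 2 ≤ q) (ha : 1 ≤ a)
    (k : ℕ → ℕ) (hk1 : k 1 = n)
    (hk : ∀ s, 1 ≤ s → s ≤ a → k (s + 1) ≤ k s) (hka : k (a + 1) = 0)
    (b : ℕ → Fin n → ZMod q)
    (hbne : ∀ i, 1 ≤ i → i ≤ n → b i ≠ 0)
    (htri : ∃ e : Equiv.Perm (Fin n),
      (∀ i j : Fin n, (j : ℕ) < (i : ℕ) → (b ((e i : ℕ) + 1)) j = 0) ∧
      (∀ i : Fin n, (b ((e i : ℕ) + 1)) i ≠ 0))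
    (hdiv : ∀ i, 1 ≤ i → i ≤ n → ∃ j₀ : Fin n,
      (∀ j : Fin n, (j : ℕ) < (j₀ : ℕ) → (b i) j = 0) ∧ (b i) j₀ ≠ 0 ∧
      ((b i) j₀).val ∣ q ∧ ∀ j : Fin n, ((b i) j₀).val ∣ ((b i) j).val) :
    Set.ncard (lambdaD q a n k b ∩ {v : Fin n → ℤ | ∀ t, 0 ≤ v t ∧ v t < (q : ℤ) ^ a})
      = q ^ (∑ ℓ ∈ Finset.Icc 1 a, k ℓ)
        / ∏ i ∈ Finset.Icc 1 n, (q / addOrderOf (b i)) := by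
  classical
  haveI : NeZero q := ⟨by omega⟩
  obtain ⟨e, he0, he1⟩ := htri
  have hkn : ∀ s, 1 ≤ s → s ≤ a → k s ≤ n := fun s h1 h2 =>
    hk1 ▸ aux_kchain a k hk 1 s le_rfl h1 (by omega)
  have hinj := aux_inj q a n hq k hk b e he0 he1 hdiv
  rw [← aux_range q a n hq ha k hk1 hk b, ← Set.image_univ,
    Set.ncard_image_of_injective _ hinj, Set.ncard_univ, Nat.card_eq_fintype_card,
    Fintype.card_pi]
  have hcardpi : ∀ s : Fin a, Fintype.card (∀ i : Fin n, Fin (bndD q a n k b s i))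
      = ∏ i : Fin n, bndD q a n k b s i := by
    intro s
    rw [Fintype.card_pi]
    exact Finset.prod_congr rfl (fun i _ => Fintype.card_fin _)
  rw [Finset.prod_congr rfl (fun s (_ : s ∈ (univ : Finset (Fin a))) => hcardpi s)]
  -- order facts
  have hOdvd : ∀ i : ℕ, addOrderOf (b i) ∣ q := by
    intro i
    apply addOrderOf_dvd_of_nsmul_eq_zero
    funext j
    simp only [Pi.smul_apply, Pi.zero_apply, nsmul_eq_mul, ZMod.natCast_self, zero_mul]
  have hOpos : ∀ i : ℕ, 0 < addOrderOf (b i) := fun i => addOrderOf_pos _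
  have hDpos : 0 < ∏ i ∈ Finset.Icc 1 n, (q / addOrderOf (b i)) :=
    Finset.prod_pos fun i _ => Nat.div_pos (Nat.le_of_dvd (by omega) (hOdvd i)) (hOpos i)
  -- convert the Fin product to the Icc/Ioc product
  have hconv : ∏ s : Fin a, ∏ i : Fin n, bndD q a n k b s i
      = ∏ s ∈ Icc 1 a, ∏ i ∈ Ioc (k (s + 1)) (k s),
          (addOrderOf (b i) * q ^ (s - 1)) := by
    have h1 : ∏ s : Fin a, ∏ i : Fin n, bndD q a n k b s i
        = ∏ s : Fin a, ∏ i : Fin n,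
            (if k ((s : ℕ) + 1 + 1) < (i : ℕ) + 1 ∧ (i : ℕ) + 1 ≤ k ((s : ℕ) + 1) then
              addOrderOf (b ((i : ℕ) + 1)) * q ^ ((s : ℕ) + 1 - 1) else 1) := by
      apply Finset.prod_congr rfl
      intro s _
      apply Finset.prod_congr rfl
      intro i _
      simp only [bndD, Nat.add_sub_cancel]
    have h2 : (∏ s : Fin a, ∏ i : Fin n,
          (if k ((s : ℕ) + 1 + 1) < (i : ℕ) + 1 ∧ (i : ℕ) + 1 ≤ k ((s : ℕ) + 1) then
            addOrderOf (b ((i : ℕ) + 1)) * q ^ ((s : ℕ) + 1 - 1) else 1))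
        = ∏ s ∈ Icc 1 a, ∏ i ∈ Ioc (k (s + 1)) (k s),
            (if k (s + 1) < i ∧ i ≤ k s then addOrderOf (b i) * q ^ (s - 1) else 1) :=
      aux_prod_convert a n k hkn
        (fun s' i' => if k (s' + 1) < i' ∧ i' ≤ k s' then addOrderOf (b i') * q ^ (s' - 1) else 1)
        (fun s hs1 hsa i hi1 hin hno => if_neg hno)
    have h3 : (∏ s ∈ Icc 1 a, ∏ i ∈ Ioc (k (s + 1)) (k s),
          (if k (s + 1) < i ∧ i ≤ k s then addOrderOf (b i) * q ^ (s - 1) else 1))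
        = ∏ s ∈ Icc 1 a, ∏ i ∈ Ioc (k (s + 1)) (k s), (addOrderOf (b i) * q ^ (s - 1)) := by
      apply Finset.prod_congr rfl
      intro s _
      apply Finset.prod_congr rfl
      intro i hi
      simp only [Finset.mem_Ioc] at hi
      exact if_pos hi
    rw [h1, h2, h3]
  rw [hconv]
  -- main multiplicative identity
  have hD2 : ∏ i ∈ Finset.Icc 1 n, (q / addOrderOf (b i))
      = ∏ s ∈ Icc 1 a, ∏ i ∈ Ioc (k (s + 1)) (k s), (q / addOrderOf (b i)) := by
    rw [aux_partition a k ha hk (fun i => q / addOrderOf (b i)), hka, hk1, aux_Icc_Ioc]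
  have hmain : (∏ s ∈ Icc 1 a, ∏ i ∈ Ioc (k (s + 1)) (k s),
        (addOrderOf (b i) * q ^ (s - 1)))
      * ∏ i ∈ Finset.Icc 1 n, (q / addOrderOf (b i))
      = q ^ (∑ ℓ ∈ Finset.Icc 1 a, k ℓ) := by
    rw [hD2, ← Finset.prod_mul_distrib]
    have hstep : ∀ s ∈ Icc 1 a,
        (∏ i ∈ Ioc (k (s + 1)) (k s), (addOrderOf (b i) * q ^ (s - 1)))
          * (∏ i ∈ Ioc (k (s + 1)) (k s), (q / addOrderOf (b i)))
        = q ^ (s * (k s - k (s + 1))) := by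
      intro s hs
      simp only [Finset.mem_Icc] at hs
      rw [← Finset.prod_mul_distrib]
      have hterm : ∀ i ∈ Ioc (k (s + 1)) (k s),
          addOrderOf (b i) * q ^ (s - 1) * (q / addOrderOf (b i)) = q ^ s := by
        intro i _
        rw [mul_right_comm, Nat.mul_div_cancel' (hOdvd i), ← pow_succ']
        congr 1
        omega
      rw [Finset.prod_congr rfl hterm, Finset.prod_const, Nat.card_Ioc, ← pow_mul]
    rw [Finset.prod_congr rfl hstep, Finset.prod_pow_eq_pow_sum]
    congr 1
    have htel := aux_tel a k hk
    rw [hka, Nat.mul_zero, Nat.add_zero] at htel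
    exact htel
  rw [← hmain, Nat.mul_div_cancel _ hDpos]
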